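/- arXiv:1409.5254 — 5 statements merged into one kernel-verified Lean document; each statement's English description precedes it below -/
import Mathlib

section
/- For the function Ŝ(ω, α, θ)² = (1−ω)² + 2ω(1−ω)α cos(θ) + α²ω² with α ≥ −1, the min over ω ∈ (0,1] of the max over θ ∈ [π/2, π] of Ŝ(ω, α, θ) equals α/√(1+α²) if α ≥ 0, and equals |α| if α < 0; the optimum is attained at ω* = 1/(1+α²), θ* = π/2 when α ≥ 0, and at ω* = 1, θ* = π when α < 0. -/
open Real Set

/-- Min-max principle for the smoothing symbol
`Ŝ(ω,α,θ) = √((1-ω)² + 2ω(1-ω)α cos θ + α²ω²)` with `α ≥ -1`: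
the infimum over `ω ∈ (0,1]` of the supremum over `θ ∈ [π/2, π]` equals
`α/√(1+α²)` if `α ≥ 0` and `|α|` if `α < 0`, attained at
`ω* = 1/(1+α²), θ* = π/2` (resp. `ω* = 1, θ* = π`). -/
theorem smoother_minmax (α : ℝ) (hα : -1 ≤ α) :
    let S : ℝ → ℝ → ℝ := fun ω θ =>
      Real.sqrt ((1 - ω) ^ 2 + 2 * ω * (1 - ω) * α * Real.cos θ + α ^ 2 * ω ^ 2)
    let ωstar : ℝ := if 0 ≤ α then 1 / (1 + α ^ 2) else 1
    let θstar : ℝ := if 0 ≤ α then π / 2 else π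
    let v : ℝ := if 0 ≤ α then α / Real.sqrt (1 + α ^ 2) else |α|
    ωstar ∈ Set.Ioc (0 : ℝ) 1 ∧ θstar ∈ Set.Icc (π / 2) π ∧
    IsGreatest (S ωstar '' Set.Icc (π / 2) π) (S ωstar θstar) ∧
    S ωstar θstar = v ∧
    ∀ ω ∈ Set.Ioc (0 : ℝ) 1, ∃ θ ∈ Set.Icc (π / 2) π, v ≤ S ω θ := by
  intro S ωstar θstar v
  have hpi : (0:ℝ) < π := Real.pi_pos
  by_cases h : 0 ≤ α
  · -- case α ≥ 0
    simp only [ωstar, θstar, v, if_pos h]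
    have ht : (0:ℝ) < 1 + α ^ 2 := by positivity
    have hs : Real.sqrt (1 + α ^ 2) ^ 2 = 1 + α ^ 2 := Real.sq_sqrt ht.le
    have hs0 : 0 < Real.sqrt (1 + α ^ 2) := Real.sqrt_pos.mpr ht
    set ω := 1 / (1 + α ^ 2) with hω
    have hω0 : 0 < ω := by positivity
    have hω1 : ω ≤ 1 := by
      rw [hω, div_le_one ht]; nlinarith
    have hval : S ω (π / 2) = α / Real.sqrt (1 + α ^ 2) := by
      have hsq : (1 - ω) ^ 2 + 2 * ω * (1 - ω) * α * Real.cos (π/2) + α ^ 2 * ω ^ 2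
          = (α / Real.sqrt (1 + α ^ 2)) ^ 2 := by
        rw [Real.cos_pi_div_two,
          show (α / Real.sqrt (1 + α ^ 2)) ^ 2 = α ^ 2 / (1 + α ^ 2) by
            rw [div_pow, hs], hω]
        field_simp
        ring
      simp only [S, hsq]
      exact Real.sqrt_sq (by positivity)
    refine ⟨⟨hω0, hω1⟩, ⟨le_refl _, by linarith⟩, ⟨⟨π/2, ⟨le_refl _, by linarith⟩, rfl⟩, ?_⟩,
      hval, ?_⟩
    · rintro y ⟨θ, ⟨hθ1, hθ2⟩, rfl⟩
      apply Real.sqrt_le_sqrt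
      have hc : Real.cos θ ≤ 0 :=
        Real.cos_nonpos_of_pi_div_two_le_of_le hθ1 (by linarith)
      have hcoef : 0 ≤ 2 * ω * (1 - ω) * α := by
        have : 0 ≤ 1 - ω := by linarith
        positivity
      rw [Real.cos_pi_div_two]
      nlinarith [mul_nonpos_of_nonneg_of_nonpos hcoef hc]
    · intro ω' ⟨hω'0, hω'1⟩
      refine ⟨π/2, ⟨le_refl _, by linarith⟩, ?_⟩
      simp only [S, Real.cos_pi_div_two]
      rw [show α / Real.sqrt (1 + α ^ 2) =
          Real.sqrt ((α / Real.sqrt (1 + α ^ 2)) ^ 2) from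
          (Real.sqrt_sq (by positivity)).symm]
      apply Real.sqrt_le_sqrt
      rw [div_pow, hs, div_le_iff₀ ht]
      nlinarith [sq_nonneg ((1 + α ^ 2) * ω' - 1)]
  · -- case α < 0
    simp only [ωstar, θstar, v, if_neg h]
    push_neg at h
    have hconst : ∀ θ : ℝ, S 1 θ = |α| := by
      intro θ
      simp only [S]
      have : (1 - 1) ^ 2 + 2 * 1 * (1 - 1) * α * Real.cos θ + α ^ 2 * 1 ^ 2 = α ^ 2 := by
        ring
      rw [this, Real.sqrt_sq_eq_abs]
    refine ⟨⟨one_pos, le_refl _⟩, ⟨by linarith, le_refl _⟩,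
      ⟨⟨π, ⟨by linarith, le_refl _⟩, rfl⟩, ?_⟩, hconst π, ?_⟩
    · rintro y ⟨θ, _, rfl⟩
      simp only [hconst]; exact le_refl _
    · intro ω' ⟨hω'0, hω'1⟩
      refine ⟨π, ⟨by linarith, le_refl _⟩, ?_⟩
      simp only [S, Real.cos_pi]
      have hsq : (1 - ω') ^ 2 + 2 * ω' * (1 - ω') * α * (-1) + α ^ 2 * ω' ^ 2
          = (1 - ω' - α * ω') ^ 2 := by ring
      rw [hsq, Real.sqrt_sq_eq_abs]
      have h1 : -α ≤ 1 - ω' - α * ω' := by nlinarith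
      calc |α| = -α := abs_of_neg h
        _ ≤ 1 - ω' - α * ω' := h1
        _ ≤ |1 - ω' - α * ω'| := le_abs_self _
end

section
/- For α ∈ ℝ with (5 − 3√3)/2 ≤ α ≤ 1 and the optimal damping parameter ω* = 1/(1+α²) if α ≥ 0 and ω* = 1 if α < 0, we have sup over θ ∈ [π/2, π] of Ŝ(ω*, α, θ) ≤ 1/√2. -/
open Real Set

/-- For `(5 - 3√3)/2 ≤ α ≤ 1` and the optimal damping parameter
`ω* = 1/(1+α²)` if `α ≥ 0`, `ω* = 1` if `α < 0`, the supremum over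
`θ ∈ [π/2, π]` of `Ŝ(ω*, α, θ)` is at most `1/√2`. -/
theorem smoothing_factor_le_inv_sqrt_two (α : ℝ)
    (h1 : (5 - 3 * Real.sqrt 3) / 2 ≤ α) (h2 : α ≤ 1) :
    let S : ℝ → ℝ → ℝ := fun ω θ =>
      Real.sqrt ((1 - ω) ^ 2 + 2 * ω * (1 - ω) * α * Real.cos θ + α ^ 2 * ω ^ 2)
    let ωstar : ℝ := if 0 ≤ α then 1 / (1 + α ^ 2) else 1
    ∀ θ ∈ Set.Icc (π / 2) π, S ωstar θ ≤ 1 / Real.sqrt 2 := by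
  intro S ωstar θ hθ
  have hc : Real.cos θ ≤ 0 :=
    Real.cos_nonpos_of_pi_div_two_le_of_le hθ.1 (by linarith [hθ.2, Real.pi_pos])
  have key : (1 - ωstar) ^ 2 + 2 * ωstar * (1 - ωstar) * α * Real.cos θ
      + α ^ 2 * ωstar ^ 2 ≤ 1 / 2 := by
    by_cases hα : 0 ≤ α
    · simp only [ωstar, if_pos hα]
      have hd : (0:ℝ) < 1 + α ^ 2 := by positivity
      set ω : ℝ := 1 / (1 + α ^ 2) with hω
      have hωd : ω * (1 + α ^ 2) = 1 := by rw [hω, one_div, inv_mul_cancel₀ hd.ne']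
      have hω0 : 0 ≤ ω := by positivity
      have hω1 : ω ≤ 1 := by rw [hω, div_le_one hd]; nlinarith
      have hmid : 2 * ω * (1 - ω) * α * Real.cos θ ≤ 0 := by
        apply mul_nonpos_of_nonneg_of_nonpos _ hc
        have : 0 ≤ 1 - ω := by linarith
        positivity
      nlinarith [sq_nonneg ω, sq_nonneg (1 - ω), sq_nonneg α, sq_nonneg (α * ω)]
    · push_neg at hα
      simp only [ωstar, if_neg (not_le.mpr hα)]
      have hs : Real.sqrt 3 ^ 2 = 3 := Real.sq_sqrt (by norm_num)
      have hs0 : (0:ℝ) ≤ Real.sqrt 3 := Real.sqrt_nonneg 3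
      nlinarith [sq_nonneg (Real.sqrt 3 - 5/3), sq_nonneg α]
  have h12 : (1:ℝ) / Real.sqrt 2 = Real.sqrt (1 / 2) := by
    rw [one_div, ← Real.sqrt_inv]; norm_num
  rw [h12]
  exact Real.sqrt_le_sqrt key
end

section
/- With the periodic system matrix L̃ and block diagonal D = I_N ⊗ A (A invertible), one step of the damped block Jacobi iteration S̃ = I − ω D^{-1} L̃ maps the blockwise Fourier mode ψ with frequency θ_k to the mode with n-th block ((1−ω)I + e^{−iθ_k} ω A^{-1} B) ψ_n; consequently ν steps map ψ_n to ((1−ω)I + e^{−iθ_k} ω A^{-1}B)^ν ψ_n. -/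
open Matrix Complex Function

lemma jacobi_prev_lemma (N : ℕ) (hN : 0 < N) (t : Fin N) :
    ((((t : ℕ) + (N - 1)) % N) + 1) % N = (t : ℕ) := by
  rw [Nat.mod_add_mod]
  have h : (t : ℕ) + (N - 1) + 1 = (t : ℕ) + N := by omega
  rw [h, Nat.add_mod_right, Nat.mod_eq_of_lt t.isLt]

lemma jacobi_step (N m : ℕ) (hN : 0 < N) (ω : ℂ)
    (Ac Bc : Matrix (Fin m) (Fin m) ℂ) (hAc : Ac⁻¹ * Ac = 1)
    (L Dinv : Matrix (Fin N × Fin m) (Fin N × Fin m) ℂ)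
    (hL : ∀ p q : Fin N × Fin m, L p q =
      (if p.1 = q.1 then Ac p.2 q.2 else 0) +
      (if (p.1 : ℕ) = ((q.1 : ℕ) + 1) % N then -(Bc p.2 q.2) else 0))
    (hDinv : ∀ p q : Fin N × Fin m, Dinv p q = if p.1 = q.1 then Ac⁻¹ p.2 q.2 else 0)
    (θ : ℂ) (hθN : Complex.exp (Complex.I * N * θ) = 1)
    (u : Fin m → ℂ) (p : Fin N × Fin m) :
    (Complex.exp (Complex.I * ((p.1 : ℕ) + 1) * θ) * u p.2)
      - ω * (Dinv.mulVec (L.mulVec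
          (fun q => Complex.exp (Complex.I * ((q.1 : ℕ) + 1) * θ) * u q.2))) p
      = Complex.exp (Complex.I * ((p.1 : ℕ) + 1) * θ) *
        (((1 - ω) • (1 : Matrix (Fin m) (Fin m) ℂ) +
          (Complex.exp (-(Complex.I * θ)) * ω) • (Ac⁻¹ * Bc)).mulVec u) p.2 := by
  classical
  set e : Fin N → ℂ := fun t => Complex.exp (Complex.I * ((t : ℕ) + 1) * θ) with he
  set c : ℂ := Complex.exp (-(Complex.I * θ)) with hc
  set pv : Fin N := ⟨((p.1 : ℕ) + (N - 1)) % N, Nat.mod_lt _ hN⟩ with hpv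
  set v : Fin N × Fin m → ℂ := fun q => e q.1 * u q.2 with hv
  have hvapp : ∀ (a : Fin N) (b : Fin m), v (a, b) = e a * u b := fun _ _ => rfl
  have hprev1 : ((pv : ℕ) + 1) % N = (p.1 : ℕ) := jacobi_prev_lemma N hN p.1
  have hiff : ∀ q1 : Fin N, ((p.1 : ℕ) = ((q1 : ℕ) + 1) % N) ↔ q1 = pv := by
    intro q1
    constructor
    · intro h
      apply Fin.ext
      have h2 : ((q1 : ℕ) + 1) % N = ((pv : ℕ) + 1) % N := by rw [← h, hprev1]
      have h3 : (q1 : ℕ) % N = (pv : ℕ) % N := Nat.ModEq.add_right_cancel' 1 h2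
      rwa [Nat.mod_eq_of_lt q1.isLt, Nat.mod_eq_of_lt pv.isLt] at h3
    · rintro rfl; exact hprev1.symm
  have hephase : e pv = c * e p.1 := by
    have hsplit : ((pv : ℕ) + 1 = (p.1 : ℕ)) ∨ ((pv : ℕ) + 1 = (p.1 : ℕ) + N) := by
      rcases lt_or_eq_of_le (Nat.succ_le_of_lt pv.isLt) with h | h
      · left; rw [← hprev1]; exact (Nat.mod_eq_of_lt h).symm
      · right
        have h' : (pv : ℕ) + 1 = N := h
        have h0 : (p.1 : ℕ) = 0 := by rw [← hprev1, h', Nat.mod_self]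
        omega
    have hbase : Complex.exp (Complex.I * ((p.1 : ℕ) : ℂ) * θ) = c * e p.1 := by
      simp only [hc, he]
      rw [← Complex.exp_add]
      congr 1
      ring
    rcases hsplit with h | h
    · have hcast : ((pv : ℕ) : ℂ) + 1 = ((p.1 : ℕ) : ℂ) := by
        rw [← Nat.cast_one, ← Nat.cast_add, h]
      simp only [he]
      rw [hcast]
      simpa [he, hc] using hbase
    · have hcast : ((pv : ℕ) : ℂ) + 1 = ((p.1 : ℕ) : ℂ) + (N : ℂ) := by
        rw [← Nat.cast_one, ← Nat.cast_add, h, Nat.cast_add]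
      simp only [he]
      rw [hcast]
      have hexp : Complex.I * (((p.1 : ℕ) : ℂ) + (N : ℂ)) * θ
          = Complex.I * ((p.1 : ℕ) : ℂ) * θ + Complex.I * (N : ℂ) * θ := by ring
      rw [hexp, Complex.exp_add, hθN, mul_one]
      simpa [he, hc] using hbase
  have hD : ∀ x : Fin N × Fin m → ℂ,
      Dinv.mulVec x p = ∑ j, Ac⁻¹ p.2 j * x (p.1, j) := by
    intro x
    simp only [Matrix.mulVec, dotProduct, hDinv, Fintype.sum_prod_type, ite_mul, zero_mul,
      Finset.sum_ite_irrel, Finset.sum_const_zero, Finset.sum_ite_eq, Finset.mem_univ, if_true]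
  have hLv : ∀ j : Fin m,
      (L.mulVec v) (p.1, j)
        = e p.1 * Ac.mulVec u j - (c * e p.1) * Bc.mulVec u j := by
    intro j
    simp only [Matrix.mulVec, dotProduct, hL, Fintype.sum_prod_type]
    have hsummand : ∀ q1 : Fin N, ∀ q2 : Fin m,
        ((if p.1 = q1 then Ac j q2 else 0) +
          (if (p.1 : ℕ) = ((q1 : ℕ) + 1) % N then -(Bc j q2) else 0)) * v (q1, q2)
        = (if p.1 = q1 then Ac j q2 * v (q1, q2) else 0) +
          (if q1 = pv then -(Bc j q2) * v (q1, q2) else 0) := by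
      intro q1 q2
      simp only [add_mul, ite_mul, zero_mul]
      congr 1
      exact if_congr (hiff q1) rfl rfl
    simp only [hsummand]
    simp only [Finset.sum_add_distrib, Finset.sum_ite_irrel, Finset.sum_const_zero,
      Finset.sum_ite_eq, Finset.sum_ite_eq', Finset.mem_univ, if_true]
    simp only [hvapp, hephase]
    simp only [Matrix.mulVec, dotProduct, Finset.mul_sum]
    rw [← Finset.sum_add_distrib, ← Finset.sum_sub_distrib]
    apply Finset.sum_congr rfl
    intro q2 _
    ring
  have hrhs : (((1 - ω) • (1 : Matrix (Fin m) (Fin m) ℂ) +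
      (c * ω) • (Ac⁻¹ * Bc)).mulVec u) p.2
      = (1 - ω) * u p.2 + (c * ω) * ((Ac⁻¹ * Bc).mulVec u) p.2 := by
    rw [Matrix.add_mulVec, Matrix.smul_mulVec, Matrix.smul_mulVec,
      Matrix.one_mulVec]
    simp [smul_eq_mul]
  have hsum : ∑ j, Ac⁻¹ p.2 j * (L.mulVec v) (p.1, j)
      = e p.1 * u p.2 - (c * e p.1) * ((Ac⁻¹ * Bc).mulVec u) p.2 := by
    calc ∑ j, Ac⁻¹ p.2 j * (L.mulVec v) (p.1, j)
        = ∑ j, Ac⁻¹ p.2 j * (e p.1 * Ac.mulVec u j - (c * e p.1) * Bc.mulVec u j) := by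
          exact Finset.sum_congr rfl fun j _ => by rw [hLv j]
      _ = e p.1 * (∑ j, Ac⁻¹ p.2 j * Ac.mulVec u j)
            - (c * e p.1) * (∑ j, Ac⁻¹ p.2 j * Bc.mulVec u j) := by
          rw [Finset.mul_sum, Finset.mul_sum, ← Finset.sum_sub_distrib]
          exact Finset.sum_congr rfl fun j _ => by ring
      _ = e p.1 * ((Ac⁻¹ * Ac).mulVec u p.2) - (c * e p.1) * ((Ac⁻¹ * Bc).mulVec u p.2) := by
          rw [← Matrix.mulVec_mulVec, ← Matrix.mulVec_mulVec]
          rfl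
      _ = e p.1 * u p.2 - (c * e p.1) * ((Ac⁻¹ * Bc).mulVec u) p.2 := by
          rw [hAc, Matrix.one_mulVec]
  have main : v p - ω * (Dinv.mulVec (L.mulVec v)) p
      = e p.1 * (((1 - ω) • (1 : Matrix (Fin m) (Fin m) ℂ) +
          (c * ω) • (Ac⁻¹ * Bc)).mulVec u) p.2 := by
    rw [hD, hrhs, hsum]
    have hvp : v p = e p.1 * u p.2 := rfl
    rw [hvp]
    ring
  exact main

/-- One step of the damped block Jacobi iteration `S̃ = I - ω D⁻¹ L̃` for the
periodic system `L̃ = I_N ⊗ A + Ũ_N ⊗ B` with `D = I_N ⊗ A` (`A` invertible)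
maps the blockwise Fourier mode `ψ` with frequency `θ_k = 2kπ/N` to the mode
with `n`-th block `((1-ω)I + e^{-iθ_k} ω A⁻¹B) ψ_n`; hence `ν` steps map `ψ_n`
to `((1-ω)I + e^{-iθ_k} ω A⁻¹B)^ν ψ_n`. -/
theorem jacobi_smoother_fourier_symbol (N m : ℕ) (hN : 0 < N) (ω : ℝ)
    (A B : Matrix (Fin m) (Fin m) ℝ) (hA : IsUnit A.det)
    (U : Matrix (Fin m) (Fin m) ℂ) (k : ℤ) :
    let θ : ℝ := 2 * (k : ℝ) * Real.pi / N
    let Ac : Matrix (Fin m) (Fin m) ℂ := A.map (Complex.ofReal ·)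
    let Bc : Matrix (Fin m) (Fin m) ℂ := B.map (Complex.ofReal ·)
    let L : Matrix (Fin N × Fin m) (Fin N × Fin m) ℂ := fun p q =>
      (if p.1 = q.1 then Ac p.2 q.2 else 0) +
      (if (p.1 : ℕ) = ((q.1 : ℕ) + 1) % N then -(Bc p.2 q.2) else 0)
    let Dinv : Matrix (Fin N × Fin m) (Fin N × Fin m) ℂ := fun p q =>
      if p.1 = q.1 then Ac⁻¹ p.2 q.2 else 0
    let Sstep : (Fin N × Fin m → ℂ) → (Fin N × Fin m → ℂ) := fun v =>
      v - (ω : ℂ) • Dinv.mulVec (L.mulVec v)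
    let Sloc : Matrix (Fin m) (Fin m) ℂ :=
      (1 - (ω : ℂ)) • (1 : Matrix (Fin m) (Fin m) ℂ) +
        (Complex.exp (-(Complex.I * θ)) * ω) • (Ac⁻¹ * Bc)
    let ψ : Fin N × Fin m → ℂ := fun p =>
      ∑ j : Fin m, U p.2 j * Complex.exp (Complex.I * ((p.1 : ℕ) + 1) * θ)
    ∀ (ν : ℕ) (n : Fin N) (ℓ : Fin m),
      (Sstep^[ν] ψ) (n, ℓ) = ((Sloc ^ ν).mulVec (fun j => ψ (n, j))) ℓ := by
  intro θ Ac Bc L Dinv Sstep Sloc ψ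
  have hθN : Complex.exp (Complex.I * N * (θ : ℂ)) = 1 := by
    have hNC : (N : ℂ) ≠ 0 := Nat.cast_ne_zero.mpr hN.ne'
    have h : (Complex.I * N * (θ : ℂ)) = (k : ℂ) * (2 * Real.pi * Complex.I) := by
      show Complex.I * N * ((2 * (k : ℝ) * Real.pi / N : ℝ) : ℂ) = _
      push_cast
      field_simp
    rw [h, Complex.exp_int_mul_two_pi_mul_I]
  have hAc : Ac⁻¹ * Ac = 1 := by
    apply Matrix.nonsing_inv_mul
    have hdet : Ac.det = ((A.det : ℝ) : ℂ) := by
      have h := RingHom.map_det Complex.ofRealHom A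
      simpa [RingHom.mapMatrix_apply, Ac, Matrix.map] using h.symm
    rw [hdet]
    have hA0 : A.det ≠ 0 := by
      intro h
      rw [h] at hA
      simp at hA
    exact isUnit_iff_ne_zero.mpr (by exact_mod_cast hA0)
  set w : Fin m → ℂ := fun ℓ => ∑ j, U ℓ j with hw
  set e : Fin N → ℂ := fun t => Complex.exp (Complex.I * ((t : ℕ) + 1) * (θ : ℂ)) with he
  have hψ : ψ = fun p => e p.1 * w p.2 := by
    funext p
    show ∑ j : Fin m, U p.2 j * Complex.exp (Complex.I * ((p.1 : ℕ) + 1) * θ) = _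
    rw [← Finset.sum_mul]
    exact mul_comm _ _
  have key : ∀ ν : ℕ, Sstep^[ν] ψ = fun p => e p.1 * ((Sloc ^ ν).mulVec w) p.2 := by
    intro ν
    induction ν with
    | zero =>
      simp only [Function.iterate_zero, id_eq, pow_zero, Matrix.one_mulVec]
      exact hψ
    | succ ν ih =>
      rw [Function.iterate_succ_apply', ih]
      funext p
      have step := jacobi_step N m hN (ω : ℂ) Ac Bc hAc L Dinv (fun _ _ => rfl)
        (fun _ _ => rfl) (θ : ℂ) hθN ((Sloc ^ ν).mulVec w) p
      calc Sstep (fun p => e p.1 * ((Sloc ^ ν).mulVec w) p.2) p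
          = (e p.1 * ((Sloc ^ ν).mulVec w) p.2)
            - (ω : ℂ) * (Dinv.mulVec (L.mulVec
                (fun q => e q.1 * ((Sloc ^ ν).mulVec w) q.2))) p := rfl
        _ = e p.1 * (Sloc.mulVec ((Sloc ^ ν).mulVec w)) p.2 := step
        _ = e p.1 * ((Sloc ^ (ν + 1)).mulVec w) p.2 := by
            rw [Matrix.mulVec_mulVec, ← pow_succ']
  intro ν n ℓ
  rw [key ν]
  show e n * ((Sloc ^ ν).mulVec w) ℓ = _
  have hψn : (fun j => ψ (n, j)) = e n • w := by
    funext j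
    rw [hψ]
    simp [smul_eq_mul]
  rw [hψn, Matrix.mulVec_smul]
  simp [smul_eq_mul]
end

section
/- For θ ∈ ℝ and τ > 0 define ρ(θ, τ) := |(4(1+τ)² sin²θ + τ²(1 + 2τ − e^{2iθ})) / ((2 + τ(2+τ))² ((1+2τ)e^{2iθ} − 1))|. Then max over θ ∈ [−π/2, π/2] of ρ(θ, τ) is attained at θ = π/2 and equals 1/(2 + 2τ + τ²). -/
open Complex Real Set

/-- The spectral radius of the two-grid Fourier symbol for backward Euler:
`ρ(θ,τ) = |(4(1+τ)² sin²θ + τ²(1+2τ-e^{2iθ})) / ((2+τ(2+τ))² ((1+2τ)e^{2iθ}-1))|`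
attains its maximum over `θ ∈ [-π/2, π/2]` at `θ = π/2`, with value
`1/(2+2τ+τ²)`. -/
theorem twogrid_convergence_factor (τ : ℝ) (hτ : 0 < τ) :
    let ρ : ℝ → ℝ := fun θ =>
      ‖(((4 * (1 + τ) ^ 2 * Real.sin θ ^ 2 : ℝ) : ℂ) +
            (τ : ℂ) ^ 2 * (1 + 2 * (τ : ℂ) - Complex.exp (2 * Complex.I * θ)))‖ /
      ‖(((2 + τ * (2 + τ) : ℝ) : ℂ) ^ 2 *
          ((1 + 2 * (τ : ℂ)) * Complex.exp (2 * Complex.I * θ) - 1))‖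
    IsGreatest (ρ '' Set.Icc (-(π / 2)) (π / 2)) (ρ (π / 2)) ∧
    ρ (π / 2) = 1 / (2 + 2 * τ + τ ^ 2) := by
  intro ρ
  have hK : (0:ℝ) < 2 + 2*τ + τ^2 := by nlinarith
  have hexp2 : Complex.exp (2 * Complex.I * ((π/2 : ℝ) : ℂ)) = -1 := by
    rw [show (2 * Complex.I * ((π/2:ℝ):ℂ)) = (π:ℝ) * Complex.I by push_cast; ring]
    exact Complex.exp_pi_mul_I
  have hval : ρ (π/2) = 1 / (2 + 2 * τ + τ ^ 2) := by
    show ‖_‖ / ‖_‖ = _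
    rw [hexp2, Real.sin_pi_div_two]
    have hnum : ((4 * (1 + τ) ^ 2 * (1:ℝ) ^ 2 : ℝ) : ℂ) +
        (τ : ℂ) ^ 2 * (1 + 2 * (τ : ℂ) - (-1)) =
        ((4*(1+τ)^2 + τ^2*(2+2*τ) : ℝ) : ℂ) := by push_cast; ring
    have hden : ((2 + τ * (2 + τ) : ℝ) : ℂ) ^ 2 * ((1 + 2 * (τ : ℂ)) * (-1) - 1) =
        ((-((2+τ*(2+τ))^2 * (2+2*τ)) : ℝ) : ℂ) := by push_cast; ring
    rw [hnum, hden]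
    simp only [Complex.norm_real, Real.norm_eq_abs]
    rw [_root_.abs_of_nonneg (show (0:ℝ) ≤ 4*(1+τ)^2 + τ^2*(2+2*τ) by positivity), abs_neg,
      _root_.abs_of_nonneg (show (0:ℝ) ≤ (2+τ*(2+τ))^2 * (2+2*τ) by positivity)]
    have h1 : (0:ℝ) < 2 + 2*τ := by linarith
    have h2 : (0:ℝ) < (2+τ*(2+τ))^2 := by nlinarith
    field_simp
    ring
  refine ⟨⟨⟨π/2, ⟨by linarith [Real.pi_pos], le_refl _⟩, rfl⟩, ?_⟩, hval⟩
  rintro y ⟨θ, -, rfl⟩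
  rw [hval]
  have hexp : Complex.exp (2 * Complex.I * (θ:ℂ)) =
      ((Real.cos (2*θ) : ℝ) : ℂ) + ((Real.sin (2*θ) : ℝ) : ℂ) * Complex.I := by
    rw [show (2 * Complex.I * (θ:ℂ)) = ((2*θ:ℝ):ℂ) * Complex.I by push_cast; ring,
      Complex.exp_mul_I, ← Complex.ofReal_cos, ← Complex.ofReal_sin]
  set c := Real.cos (2*θ) with hc
  set s := Real.sin (2*θ) with hs
  have hcs : s^2 = 1 - c^2 := by
    have := Real.sin_sq_add_cos_sq (2*θ); linarith
  have hc1 : c ≤ 1 := Real.cos_le_one _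
  have hc2 : -1 ≤ c := Real.neg_one_le_cos _
  have hsin : Real.sin θ ^ 2 = 1/2 - c/2 := by
    rw [hc]; exact Real.sin_sq_eq_half_sub θ
  show ‖_‖ / ‖_‖ ≤ _
  have hnum : ((4 * (1 + τ) ^ 2 * Real.sin θ ^ 2 : ℝ) : ℂ) +
      (τ : ℂ) ^ 2 * (1 + 2 * (τ : ℂ) - Complex.exp (2 * Complex.I * θ)) =
      ((2*(1+τ)^2*(1-c) + τ^2*(1+2*τ) - τ^2*c : ℝ) : ℂ) + ((-(τ^2*s) : ℝ) : ℂ) * Complex.I := by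
    rw [hexp, hsin]; push_cast; ring
  have hden : ((2 + τ * (2 + τ) : ℝ) : ℂ) ^ 2 *
      ((1 + 2 * (τ : ℂ)) * Complex.exp (2 * Complex.I * θ) - 1) =
      (((2+τ*(2+τ))^2 * ((1+2*τ)*c - 1) : ℝ) : ℂ) +
      (((2+τ*(2+τ))^2 * ((1+2*τ)*s) : ℝ) : ℂ) * Complex.I := by
    rw [hexp]; push_cast; ring
  rw [hnum, hden, Complex.norm_def, Complex.norm_def,
    Complex.normSq_add_mul_I, Complex.normSq_add_mul_I]
  have hPeq : (2*(1+τ)^2*(1-c) + τ^2*(1+2*τ) - τ^2*c)^2 + (-(τ^2*s))^2 =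
      (2*(1+τ)^2*(1-c) + τ^2*(1+2*τ) - τ^2*c)^2 + τ^4*(1-c^2) := by
    linear_combination τ^4 * hcs
  have hQeq : ((2+τ*(2+τ))^2 * ((1+2*τ)*c - 1))^2 + ((2+τ*(2+τ))^2 * ((1+2*τ)*s))^2 =
      ((2+τ*(2+τ))^2 * ((1+2*τ)*c - 1))^2 + ((2+τ*(2+τ))^2)^2 * (1+2*τ)^2 * (1-c^2) := by
    linear_combination ((2+τ*(2+τ))^2)^2 * (1+2*τ)^2 * hcs
  rw [hPeq, hQeq]
  set P : ℝ := (2*(1+τ)^2*(1-c) + τ^2*(1+2*τ) - τ^2*c)^2 + τ^4*(1-c^2) with hP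
  set Q : ℝ := ((2+τ*(2+τ))^2 * ((1+2*τ)*c - 1))^2 + ((2+τ*(2+τ))^2)^2 * (1+2*τ)^2 * (1-c^2) with hQ
  have hPnn : (0:ℝ) ≤ P := by
    rw [hP]; have : (0:ℝ) ≤ 1 - c^2 := by nlinarith
    positivity
  have hQpos : (0:ℝ) < Q := by
    have hd : Q = ((2+τ*(2+τ))^2)^2 * (((1+2*τ)^2 + 1) - 2*(1+2*τ)*c) := by rw [hQ]; ring
    rw [hd]
    apply mul_pos (by positivity)
    have hr : (1+2*τ)^2 + 1 - 2*(1+2*τ)*c = 4*τ^2 + 2*((1+2*τ)*(1-c)) := by ring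
    have h4 : (0:ℝ) < 4*τ^2 := by positivity
    have h5 : (0:ℝ) ≤ (1+2*τ)*(1-c) :=
      mul_nonneg (by linarith) (by linarith)
    linarith only [hr, h4, h5]
  rw [div_le_div_iff₀ (Real.sqrt_pos.mpr hQpos) hK]
  have e1 : (0:ℝ) ≤ (2+2*τ+τ^2)^2 * (((2*(1+τ)^2+τ^2)^2 - τ^4) * ((1-c)*(1+c))) := by
    apply mul_nonneg (by positivity)
    apply mul_nonneg ?_ (mul_nonneg (by linarith) (by linarith))
    have : (2*(1+τ)^2+τ^2)^2 - τ^4 = (2*(1+τ)^2) * (2*(1+τ)^2 + 2*τ^2) := by ring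
    rw [this]; positivity
  have e2 : (0:ℝ) ≤ (2+2*τ+τ^2)^2 * (2*τ^2*(2+2*τ)*((2+2*τ+τ^2)+τ^2)) * (1+c) := by
    apply mul_nonneg (mul_nonneg (by positivity) (by positivity)) (by linarith)
  have key : P * (2 + 2*τ + τ^2)^2 ≤ Q := by
    rw [hP, hQ]
    have hid : ((2+τ*(2+τ))^2 * ((1+2*τ)*c - 1))^2 + ((2+τ*(2+τ))^2)^2 * (1+2*τ)^2 * (1-c^2)
        - ((2*(1+τ)^2*(1-c) + τ^2*(1+2*τ) - τ^2*c)^2 + τ^4*(1-c^2)) * (2 + 2*τ + τ^2)^2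
        = (2+2*τ+τ^2)^2 * (((2*(1+τ)^2+τ^2)^2 - τ^4) * ((1-c)*(1+c)))
          + (2+2*τ+τ^2)^2 * (2*τ^2*(2+2*τ)*((2+2*τ+τ^2)+τ^2)) * (1+c) := by ring
    linarith only [hid, e1, e2]
  calc Real.sqrt P * (2 + 2*τ + τ^2) = Real.sqrt (P * (2+2*τ+τ^2)^2) := by
        rw [Real.sqrt_mul hPnn, Real.sqrt_sq hK.le]
      _ ≤ Real.sqrt Q := Real.sqrt_le_sqrt key
      _ = 1 * Real.sqrt Q := (one_mul _).symm
end

section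
/- Let R(z) = (1 + z/3)/(1 − 2z/3 + z²/6) be the stability function of the 2-stage RADAU IA scheme (the (1,2) subdiagonal Padé approximant of e^z). Then |R(z)| < 1 for all z ∈ ℂ with Re(z) < 0. -/
open Complex

/-- A-stability of the 2-stage RADAU IA scheme: its stability function
`R(z) = (1 + z/3)/(1 - 2z/3 + z²/6)`, the `(1,2)` subdiagonal Padé approximant
of `e^z`, satisfies `|R(z)| < 1` on the open left half plane. -/
theorem radauIA_two_stage_A_stable (z : ℂ) (hz : z.re < 0) :
    ‖(1 + z / 3) / (1 - 2 * z / 3 + z ^ 2 / 6)‖ < 1 := by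
  have e : (1 + z / 3) / (1 - 2 * z / 3 + z ^ 2 / 6)
      = (6 + 2 * z) / (6 - 4 * z + z ^ 2) := by
    have h1 : (6 + 2 * z : ℂ) = 6 * (1 + z / 3) := by ring
    have h2 : (6 - 4 * z + z ^ 2 : ℂ) = 6 * (1 - 2 * z / 3 + z ^ 2 / 6) := by ring
    rw [h1, h2, mul_div_mul_left _ _ (by norm_num : (6:ℂ) ≠ 0)]
  rw [e]
  set x := z.re with hx
  set y := z.im with hy
  have key : Complex.normSq (6 + 2 * z) < Complex.normSq (6 - 4 * z + z ^ 2) := by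
    simp only [Complex.normSq_apply, Complex.add_re, Complex.add_im, Complex.sub_re,
      Complex.sub_im, Complex.mul_re, Complex.mul_im,
      pow_two, Complex.re_ofNat, Complex.im_ofNat, ← hx, ← hy]
    nlinarith [sq_nonneg (x^2 + y^2), sq_nonneg x, sq_nonneg y,
      mul_nonneg (neg_nonneg.2 hz.le) (sq_nonneg y),
      mul_nonneg (neg_nonneg.2 hz.le) (sq_nonneg x), sq_nonneg (x*y)]
  have hdenpos : 0 < ‖(6 - 4 * z + z ^ 2 : ℂ)‖ := by
    rw [Complex.norm_def]
    exact Real.sqrt_pos.2 (lt_of_le_of_lt (Complex.normSq_nonneg _) key)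
  have habs : ‖(6 + 2 * z : ℂ)‖ < ‖(6 - 4 * z + z ^ 2 : ℂ)‖ := by
    rw [Complex.norm_def, Complex.norm_def]
    exact Real.sqrt_lt_sqrt (Complex.normSq_nonneg _) key
  rw [norm_div, div_lt_one hdenpos]
  exact habs
end
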